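/- Fix real numbers α with 0 ≤ α < 1 and M ≥ 1. There exist c > 0 and l₀ ∈ ℕ such that for every natural number l ≥ l₀ and every natural number m with l + m even and l − (M+1)·l^{1−α} ≤ m ≤ l − M·l^{1−α}, one has A(l, m) ≥ c·l^{α/4}. -/

import Mathlib

/-- For `l, m : ℕ` with `m ≤ l` and `l + m` even, `sphA l m` is the modulus of the value of the
`L²`-normalized spherical harmonic `Y_l^m` on `S²` at the equator:
`A(l, m) = (1 / (2^l ((l−m)/2)! ((l+m)/2)!)) √((l−m)! (l+m)! (2l+1) / (4π))`. -/
noncomputable def sphA (l m : ℕ) : ℝ :=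
  (1 / ((2 : ℝ) ^ l * (Nat.factorial ((l - m) / 2) : ℝ) * (Nat.factorial ((l + m) / 2) : ℝ))) *
    Real.sqrt (((Nat.factorial (l - m) : ℝ) * (Nat.factorial (l + m) : ℝ) * (2 * l + 1)) /
      (4 * Real.pi))

lemma cb_sq (n : ℕ) (hn : 1 ≤ n) : 4 ^ (2 * n) ≤ 4 * n * (Nat.centralBinom n) ^ 2 := by
  induction n with
  | zero => omega
  | succ n ih =>
    rcases Nat.eq_zero_or_pos n with h | h
    · subst h
      simp [Nat.centralBinom, Nat.choose]
    · have ih' := ih h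
      have key := Nat.succ_mul_centralBinom_succ n
      have h1 : (n+1) * 4 ^ (2*(n+1)) ≤ (n+1) * (4 * (n+1) * Nat.centralBinom (n+1) ^ 2) := by
        have e1 : (n+1) * (4 * (n+1) * Nat.centralBinom (n+1)^2)
            = 4 * ((n+1) * Nat.centralBinom (n+1))^2 := by ring
        rw [e1, key]
        have e2 : 4 * (2*(2*n+1) * Nat.centralBinom n)^2
            = (2*n+1)^2 * (16 * Nat.centralBinom n ^ 2) := by ring
        have e3 : (n+1) * 4 ^ (2*(n+1)) = (n+1) * 16 * 4 ^ (2*n) := by ring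
        rw [e2, e3]
        calc (n+1) * 16 * 4^(2*n) ≤ (n+1)*16*(4*n*Nat.centralBinom n^2) :=
              Nat.mul_le_mul_left _ ih'
          _ ≤ (2*n+1)^2 * (16 * Nat.centralBinom n^2) := by nlinarith
      exact Nat.le_of_mul_le_mul_left h1 (by omega)

lemma cb_real (n : ℕ) (hn : 1 ≤ n) :
    (4:ℝ)^n ≤ 2 * Real.sqrt n * (Nat.centralBinom n : ℝ) := by
  have h : (4:ℝ)^(2*n) ≤ 4 * n * (Nat.centralBinom n : ℝ)^2 := by
    exact_mod_cast cb_sq n hn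
  have hs : (Real.sqrt n)^2 = (n:ℝ) := Real.sq_sqrt (by positivity)
  have h2 : ((4:ℝ)^n)^2 ≤ (2 * Real.sqrt n * (Nat.centralBinom n : ℝ))^2 := by
    calc ((4:ℝ)^n)^2 = 4^(2*n) := by ring
      _ ≤ 4 * n * (Nat.centralBinom n : ℝ)^2 := h
      _ = (2 * Real.sqrt n * (Nat.centralBinom n : ℝ))^2 := by
          rw [mul_pow, mul_pow, hs]; ring
  have h3 := Real.sqrt_le_sqrt h2
  rwa [Real.sqrt_sq (by positivity), Real.sqrt_sq (by positivity)] at h3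

/-- Fix `0 ≤ α < 1` and `M ≥ 1`. There exist `c > 0` and `l₀` such that for all `l ≥ l₀` and
all `m` with `l + m` even and `l − (M+1)·l^(1−α) ≤ m ≤ l − M·l^(1−α)`, one has
`A(l, m) ≥ c · l^(α/4)`. -/
theorem stmt10 (α M : ℝ) (hα0 : 0 ≤ α) (hα1 : α < 1) (hM : 1 ≤ M) :
    ∃ c > (0 : ℝ), ∃ l₀ : ℕ, ∀ l : ℕ, l₀ ≤ l → ∀ m : ℕ, Even (l + m) →
      (l : ℝ) - (M + 1) * (l : ℝ) ^ (1 - α) ≤ (m : ℝ) →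
      (m : ℝ) ≤ (l : ℝ) - M * (l : ℝ) ^ (1 - α) →
      c * (l : ℝ) ^ (α / 4) ≤ sphA l m := by
  have hπ := Real.pi_pos
  have hMs : (0:ℝ) < Real.sqrt ((M+1)/2) := Real.sqrt_pos.mpr (by linarith)
  set c0 : ℝ := 1/(16 * Real.pi * Real.sqrt ((M+1)/2)) with hc0
  have hc0pos : 0 < c0 := by positivity
  refine ⟨Real.sqrt c0, Real.sqrt_pos.mpr hc0pos, 2, ?_⟩
  intro l hl m hev hlow hup
  have hl1 : (1:ℝ) ≤ (l:ℝ) := by exact_mod_cast (by omega : 1 ≤ l)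
  have hlpos : (0:ℝ) < l := by linarith
  have hrpow1 : (1:ℝ) ≤ (l:ℝ)^(1-α) := Real.one_le_rpow hl1 (by linarith)
  have hM1 : (1:ℝ) ≤ M * (l:ℝ)^(1-α) := by nlinarith
  have hml : m ≤ l := by
    have h1 : (m:ℝ) + 1 ≤ (l:ℝ) := by linarith
    have h2 : m + 1 ≤ l := by exact_mod_cast h1
    omega
  obtain ⟨t, ht⟩ := hev
  set k := t - m with hkdef
  set K := t with hKdef
  have hk2 : l - m = 2 * k := by omega
  have hK2 : l + m = 2 * K := by omega
  have hkK : k + K = l := by omega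
  have hkR : (l:ℝ) - m = 2 * k := by
    have h : ((l - m : ℕ) : ℝ) = 2 * (k:ℝ) := by rw [hk2]; push_cast; ring
    rw [Nat.cast_sub hml] at h; linarith
  have hKR : (l:ℝ) + m = 2 * K := by exact_mod_cast congrArg (Nat.cast : ℕ → ℝ) hK2
  have hk1 : 1 ≤ k := by
    have hk0 : (0:ℝ) < k := by nlinarith
    have : 0 < k := by exact_mod_cast hk0
    omega
  have hK1 : 1 ≤ K := by omega
  -- rewrite sphA
  have hfac : ∀ n : ℕ, (0:ℝ) < Nat.factorial n := fun n => by
    exact_mod_cast Nat.factorial_pos n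
  have hA : sphA l m = Real.sqrt
      ((Nat.centralBinom k * Nat.centralBinom K * (2*(l:ℝ)+1)) / (4*Real.pi*4^l)) := by
    have hdiv1 : (l - m) / 2 = k := by omega
    have hdiv2 : (l + m) / 2 = K := by omega
    have hcb1 : ((2*k).factorial : ℝ) = Nat.centralBinom k * k.factorial * k.factorial := by
      have := Nat.choose_mul_factorial_mul_factorial (Nat.le_mul_of_pos_left k (by norm_num : 0 < 2))
      rw [Nat.centralBinom_eq_two_mul_choose]
      have h2k : 2 * k - k = k := by omega
      rw [h2k] at this
      exact_mod_cast (congrArg (Nat.cast : ℕ → ℝ) this).symm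
    have hcb2 : ((2*K).factorial : ℝ) = Nat.centralBinom K * K.factorial * K.factorial := by
      have := Nat.choose_mul_factorial_mul_factorial (Nat.le_mul_of_pos_left K (by norm_num : 0 < 2))
      rw [Nat.centralBinom_eq_two_mul_choose]
      have h2K : 2 * K - K = K := by omega
      rw [h2K] at this
      exact_mod_cast (congrArg (Nat.cast : ℕ → ℝ) this).symm
    rw [sphA, hdiv1, hdiv2, hk2, hK2]
    have hD : (0:ℝ) < (2:ℝ)^l * k.factorial * K.factorial := by positivity
    rw [one_div, inv_mul_eq_div, ← Real.sqrt_sq hD.le, ← Real.sqrt_div' _ (by positivity)]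
    congr 1
    have h4 : (4:ℝ)^l = (2:ℝ)^l * 2^l := by
      rw [show (4:ℝ) = 2*2 by norm_num, mul_pow]
    field_simp [hcb1, hcb2, h4, Real.pi_ne_zero, (hfac k).ne', (hfac K).ne']
    rw [hcb1, hcb2, h4]
    ring
  rw [hA]
  -- key bounds
  have hsk : Real.sqrt k ≤ Real.sqrt ((M+1)/2) * Real.sqrt ((l:ℝ)^(1-α)) := by
    rw [← Real.sqrt_mul (by linarith) _]
    apply Real.sqrt_le_sqrt
    nlinarith
  have hsK : Real.sqrt K ≤ Real.sqrt l := by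
    apply Real.sqrt_le_sqrt
    nlinarith
  have hid : (l:ℝ)^(α/2) * (Real.sqrt ((l:ℝ)^(1-α)) * Real.sqrt l) = l := by
    rw [Real.sqrt_eq_rpow, Real.sqrt_eq_rpow, ← Real.rpow_mul hlpos.le,
      ← Real.rpow_add hlpos, ← Real.rpow_add hlpos]
    rw [show α/2 + ((1-α)*(1/2) + 1/2) = 1 by ring, Real.rpow_one]
  have hkey : 16 * Real.pi * c0 * ((l:ℝ)^(α/2) * (Real.sqrt k * Real.sqrt K)) ≤ 2*(l:ℝ)+1 := by
    have h1 : Real.sqrt k * Real.sqrt K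
        ≤ Real.sqrt ((M+1)/2) * (Real.sqrt ((l:ℝ)^(1-α)) * Real.sqrt l) := by
      calc Real.sqrt k * Real.sqrt K
          ≤ (Real.sqrt ((M+1)/2) * Real.sqrt ((l:ℝ)^(1-α))) * Real.sqrt l := by
            apply mul_le_mul hsk hsK (Real.sqrt_nonneg _) (by positivity)
        _ = _ := by ring
    have h2 : (l:ℝ)^(α/2) * (Real.sqrt k * Real.sqrt K)
        ≤ Real.sqrt ((M+1)/2) * l := by
      calc (l:ℝ)^(α/2) * (Real.sqrt k * Real.sqrt K)
          ≤ (l:ℝ)^(α/2) * (Real.sqrt ((M+1)/2) * (Real.sqrt ((l:ℝ)^(1-α)) * Real.sqrt l)) := by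
            apply mul_le_mul_of_nonneg_left h1 (by positivity)
        _ = Real.sqrt ((M+1)/2) * ((l:ℝ)^(α/2) * (Real.sqrt ((l:ℝ)^(1-α)) * Real.sqrt l)) := by
            ring
        _ = Real.sqrt ((M+1)/2) * l := by rw [hid]
    have h3 : 16 * Real.pi * c0 * (Real.sqrt ((M+1)/2) * l) = l := by
      rw [hc0]; field_simp
    have h4 := mul_le_mul_of_nonneg_left h2
      (le_of_lt (by positivity : (0:ℝ) < 16 * Real.pi * c0))
    rw [h3] at h4
    linarith
  -- main inequality on squared quantities
  have hPk : (0:ℝ) < Nat.centralBinom k := by exact_mod_cast Nat.centralBinom_pos k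
  have hPK : (0:ℝ) < Nat.centralBinom K := by exact_mod_cast Nat.centralBinom_pos K
  have hmain : c0 * (l:ℝ)^(α/2)
      ≤ (Nat.centralBinom k * Nat.centralBinom K * (2*(l:ℝ)+1)) / (4*Real.pi*4^l) := by
    rw [le_div_iff₀ (by positivity)]
    have h4l : (4:ℝ)^l = 4^k * 4^K := by rw [← pow_add, hkK]
    have hck := cb_real k hk1
    have hcK := cb_real K hK1
    calc c0 * (l:ℝ)^(α/2) * (4*Real.pi*4^l)
        = c0 * (l:ℝ)^(α/2) * (4*Real.pi) * ((4:ℝ)^k * 4^K) := by rw [h4l]; ring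
      _ ≤ c0 * (l:ℝ)^(α/2) * (4*Real.pi) *
          ((2 * Real.sqrt k * Nat.centralBinom k) * (2 * Real.sqrt K * Nat.centralBinom K)) := by
          apply mul_le_mul_of_nonneg_left _ (by positivity)
          apply mul_le_mul hck hcK (by positivity) (by positivity)
      _ = (16 * Real.pi * c0 * ((l:ℝ)^(α/2) * (Real.sqrt k * Real.sqrt K))) *
          (Nat.centralBinom k * Nat.centralBinom K) := by ring
      _ ≤ (2*(l:ℝ)+1) * (Nat.centralBinom k * Nat.centralBinom K) := by
          apply mul_le_mul_of_nonneg_right hkey (by positivity)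
      _ = Nat.centralBinom k * Nat.centralBinom K * (2*(l:ℝ)+1) := by ring
  calc Real.sqrt c0 * (l:ℝ)^(α/4)
      = Real.sqrt (c0 * (l:ℝ)^(α/2)) := by
        rw [Real.sqrt_mul hc0pos.le, Real.sqrt_eq_rpow ((l:ℝ)^(α/2)),
          ← Real.rpow_mul hlpos.le, show α/2*(1/2) = α/4 by ring]
    _ ≤ _ := Real.sqrt_le_sqrt hmain
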